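/- Let Z ~ N(μ_Z, σ_Z² I_d) with ‖μ_Z‖₂ ≤ 2 and σ_Z ∈ (0,1], and let u ∈ ℝ^d with ‖u‖₂ ≤ 1. Then E[|trunc₃(⟨Z,u⟩) − ⟨Z,u⟩|] ≤ 4·exp(−0.2/σ_Z²). -/

import Mathlib

open MeasureTheory Real RealInnerProductSpace

lemma aux_integral_abs_mul_exp {b : ℝ} (hb : 0 < b) :
    ∫ x : ℝ, |x| * Real.exp (-b * x ^ 2) = b⁻¹ := by
  have h1 : ∀ x : ℝ, |x| * Real.exp (-b * x ^ 2) = (fun t => t * Real.exp (-b * t ^ 2)) |x| := by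
    intro x; simp [sq_abs]
  have h2 : ∫ x : ℝ, (fun t => t * Real.exp (-b * t ^ 2)) |x|
      = 2 * ∫ x in Set.Ioi (0:ℝ), x * Real.exp (-b * x ^ 2) := integral_comp_abs (f := fun t => t * Real.exp (-b * t ^ 2))
  rw [show (fun x : ℝ => |x| * Real.exp (-b * x ^ 2))
      = (fun x => (fun t => t * Real.exp (-b * t ^ 2)) |x|) from funext h1, h2]
  have hIoi : ∫ x in Set.Ioi (0:ℝ), x * Real.exp (-b * x ^ 2) = (2 * b)⁻¹ := by
    have hderiv : ∀ x ∈ Set.Ici (0:ℝ),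
        HasDerivAt (fun t : ℝ => -(2 * b)⁻¹ * Real.exp (-b * t ^ 2))
          (x * Real.exp (-b * x ^ 2)) x := by
      intro x _
      have h : HasDerivAt (fun t : ℝ => -b * t ^ 2) (-b * (2 * x)) x := by
        simpa using ((hasDerivAt_pow 2 x).const_mul (-b))
      have := (h.exp).const_mul (-(2 * b)⁻¹)
      refine this.congr_deriv (Eq.symm ?_)
      field_simp
    have htend : Filter.Tendsto (fun t : ℝ => -(2 * b)⁻¹ * Real.exp (-b * t ^ 2))
        Filter.atTop (nhds 0) := by
      have : Filter.Tendsto (fun t : ℝ => -b * t ^ 2) Filter.atTop Filter.atBot := by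
        apply Filter.Tendsto.const_mul_atTop_of_neg (neg_neg_iff_pos.mpr hb)
        exact Filter.tendsto_pow_atTop (by norm_num)
      have := (Real.tendsto_exp_atBot.comp this).const_mul (-(2 * b)⁻¹)
      simpa using this
    have := MeasureTheory.integral_Ioi_of_hasDerivAt_of_tendsto' hderiv
      ((integrable_mul_exp_neg_mul_sq hb).integrableOn) htend
    simpa using this
  rw [hIoi]
  rw [mul_inv]
  ring


noncomputable def gaussianPi {d : ℕ} (μZ : EuclideanSpace ℝ (Fin d)) (σ : ℝ) :
    Measure (EuclideanSpace ℝ (Fin d)) :=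
  volume.withDensity (fun x =>
    ENNReal.ofReal ((2 * π * σ ^ 2) ^ (-(d : ℝ) / 2) * Real.exp (-‖x - μZ‖ ^ 2 / (2 * σ ^ 2))))

noncomputable def trunc (c : ℝ) (b : ℝ) : ℝ := b * min 1 (c / |b|)

set_option maxHeartbeats 1000000 in
theorem gaussian_trunc_error_expectation {d : ℕ} (μZ : EuclideanSpace ℝ (Fin d)) (σZ : ℝ)
    (hσ0 : 0 < σZ) (hσ1 : σZ ≤ 1) (hμ : ‖μZ‖ ≤ 2)
    (u : EuclideanSpace ℝ (Fin d)) (hu : ‖u‖ ≤ 1) :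
    ∫ x, |trunc 3 ⟪x, u⟫ - ⟪x, u⟫| ∂(gaussianPi μZ σZ) ≤
      4 * Real.exp (-0.2 / σZ ^ 2) := by
  have hσ2 : (0:ℝ) < σZ ^ 2 := by positivity
  by_cases hu0 : u = 0
  · subst hu0
    have hz : ∀ x : EuclideanSpace ℝ (Fin d), |trunc 3 ⟪x, (0 : EuclideanSpace ℝ (Fin d))⟫ - ⟪x, (0 : EuclideanSpace ℝ (Fin d))⟫| = 0 := by
      intro x; simp [trunc]
    simp only [hz, integral_zero]
    positivity
  have hd : 0 < d := by
    rcases Nat.eq_zero_or_pos d with h | h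
    · exfalso; apply hu0; subst h; exact Subsingleton.elim u 0
    · exact h
  have hnu : 0 < ‖u‖ := norm_pos_iff.mpr hu0
  set i0 : Fin d := ⟨0, hd⟩ with hi0
  set v : EuclideanSpace ℝ (Fin d) := ‖u‖⁻¹ • u with hv
  have hvnorm : ‖v‖ = 1 := norm_smul_inv_norm hu0
  have hcard : Module.finrank ℝ (EuclideanSpace ℝ (Fin d)) = Fintype.card (Fin d) := by
    simp [finrank_euclideanSpace]
  have horth : Orthonormal ℝ (({i0} : Set (Fin d)).restrict (fun _ : Fin d => v)) := by
    constructor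
    · intro i; exact hvnorm
    · intro i j hij
      exact absurd (Subtype.ext ((Set.mem_singleton_iff.mp i.2).trans
        (Set.mem_singleton_iff.mp j.2).symm)) hij
  obtain ⟨b, hb⟩ := horth.exists_orthonormalBasis_extension_of_card_eq hcard
  have hbi0 : b i0 = v := hb i0 rfl
  have hrepr : ∀ y : EuclideanSpace ℝ (Fin d), ⟪y, v⟫ = b.repr y i0 := by
    intro y
    rw [real_inner_comm, ← hbi0, ← OrthonormalBasis.repr_apply_apply]
  set C : ℝ := (2 * π * σZ ^ 2) ^ (-(d:ℝ) / 2) with hC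
  have hCpos : 0 < C := Real.rpow_pos_of_pos (by positivity) _
  set F : EuclideanSpace ℝ (Fin d) → ℝ :=
    fun x => |⟪x - μZ, v⟫| * Real.exp ((⟪x - μZ, v⟫ ^ 2 - 1) / (4 * σZ ^ 2)) with hF
  -- Step A : pointwise bound
  have hpoint : ∀ x, |trunc 3 ⟪x, u⟫ - ⟪x, u⟫| ≤ F x := by
    intro x
    have htr : |trunc 3 ⟪x, u⟫ - ⟪x, u⟫| ≤ max (|⟪x, u⟫| - 3) 0 := by
      rcases eq_or_ne (⟪x, u⟫ : ℝ) 0 with h0 | h0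
      · rw [h0]; simp [trunc]
      have habs : 0 < |(⟪x, u⟫ : ℝ)| := abs_pos.mpr h0
      rcases le_or_gt |(⟪x, u⟫ : ℝ)| 3 with h | h
      · have h1 : (1:ℝ) ≤ 3 / |(⟪x, u⟫ : ℝ)| := (one_le_div habs).mpr h
        rw [trunc, min_eq_left h1]; simp
      · have h1 : 3 / |(⟪x, u⟫ : ℝ)| ≤ 1 := (div_le_one habs).mpr h.le
        rw [trunc, min_eq_right h1]
        have h2 : (⟪x, u⟫ : ℝ) * (3 / |⟪x, u⟫|) - ⟪x, u⟫ = ⟪x, u⟫ * (3 / |⟪x, u⟫| - 1) := by ring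
        rw [h2, abs_mul, abs_of_nonpos (sub_nonpos.mpr h1)]
        have h5 : (3 / |(⟪x, u⟫ : ℝ)|) * |(⟪x, u⟫ : ℝ)| = 3 := div_mul_cancel₀ 3 (ne_of_gt habs)
        have h4 : |(⟪x, u⟫ : ℝ)| * -(3 / |⟪x, u⟫| - 1) = |⟪x, u⟫| - 3 := by
          calc |(⟪x, u⟫ : ℝ)| * -(3 / |⟪x, u⟫| - 1)
              = |(⟪x, u⟫ : ℝ)| - (3 / |(⟪x, u⟫ : ℝ)|) * |(⟪x, u⟫ : ℝ)| := by ring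
            _ = |(⟪x, u⟫ : ℝ)| - 3 := by rw [h5]
        rw [h4]; exact le_max_left _ _
    refine htr.trans ?_
    set s : ℝ := ⟪x - μZ, v⟫ with hsdef
    have hxu : (⟪x - μZ, u⟫ : ℝ) = ‖u‖ * s := by
      rw [hsdef, hv, real_inner_smul_right, ← mul_assoc,
        mul_inv_cancel₀ (ne_of_gt hnu), one_mul]
    have hmu : |(⟪μZ, u⟫ : ℝ)| ≤ 2 := by
      refine (abs_real_inner_le_norm _ _).trans ?_
      calc ‖μZ‖ * ‖u‖ ≤ 2 * 1 := mul_le_mul hμ hu (norm_nonneg _) (by norm_num)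
        _ = 2 := by norm_num
    have hb3 : |(⟪x, u⟫ : ℝ)| ≤ 2 + ‖u‖ * |s| := by
      have hsplit : (⟪x, u⟫ : ℝ) = ⟪μZ, u⟫ + ⟪x - μZ, u⟫ := by
        rw [inner_sub_left]; ring
      rw [hsplit]
      refine (abs_add_le _ _).trans ?_
      rw [hxu, abs_mul, abs_of_nonneg (norm_nonneg u)]
      exact add_le_add_left hmu _
    have hFnn : 0 ≤ F x := by
      rw [hF]
      positivity
    have hFx : F x = |s| * Real.exp ((s ^ 2 - 1) / (4 * σZ ^ 2)) := by rw [hF]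
    rcases le_or_gt (‖u‖ * |s|) 1 with hc | hc
    · exact max_le (by linarith) hFnn
    · have hus : ‖u‖ * |s| ≤ |s| := by nlinarith [abs_nonneg s]
      have hs1 : 1 ≤ |s| := by linarith
      have hs2 : 1 ≤ s ^ 2 := by nlinarith [sq_abs s, abs_nonneg s]
      have hexp : 1 ≤ Real.exp ((s ^ 2 - 1) / (4 * σZ ^ 2)) :=
        Real.one_le_exp (div_nonneg (by linarith) (by positivity))
      have : ‖u‖ * |s| ≤ F x := by
        rw [hFx]
        nlinarith [abs_nonneg s]
      exact max_le (by linarith) hFnn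
  -- the density as a real function
  set ρ : EuclideanSpace ℝ (Fin d) → ℝ :=
    fun x => C * Real.exp (-‖x - μZ‖ ^ 2 / (2 * σZ ^ 2)) with hρ
  have hρnn : ∀ x, 0 ≤ ρ x := fun x => by positivity
  have hρcont : Continuous ρ := by fun_prop
  have hmeas : Measurable fun x => (ρ x).toNNReal :=
    (continuous_real_toNNReal.comp hρcont).measurable
  have hgp : gaussianPi μZ σZ = volume.withDensity fun x => ((ρ x).toNNReal : ENNReal) := rfl
  -- the shifted integrand
  set G : EuclideanSpace ℝ (Fin d) → ℝ :=
    fun y => (C * Real.exp (-‖y‖ ^ 2 / (2 * σZ ^ 2))) *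
      (|b.repr y i0| * Real.exp (((b.repr y i0) ^ 2 - 1) / (4 * σZ ^ 2))) with hG
  have hGF : ∀ x, ρ x * F x = G (x - μZ) := by
    intro x
    simp only [hG, hF, hρ, ← hrepr]
    try ring
  -- coordinate functions on the pi side
  set g : Fin d → ℝ → ℝ := fun i t =>
    (if i = i0 then |t| * Real.exp ((t ^ 2 - 1) / (4 * σZ ^ 2)) else 1) *
      Real.exp (-t ^ 2 / (2 * σZ ^ 2)) with hg
  set P : (Fin d → ℝ) → ℝ := fun w => C * ∏ i, g i (w i) with hP
  -- bridging : G after the isometry+equiv equals P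
  have hbridge : ∀ z : EuclideanSpace ℝ (Fin d),
      G (b.repr.symm z) = P ((MeasurableEquiv.toLp 2 (Fin d → ℝ)).symm z) := by
    intro z
    have hz0 : b.repr (b.repr.symm z) = z := b.repr.apply_symm_apply z
    have hnz : ‖b.repr.symm z‖ = ‖z‖ := b.repr.symm.norm_map z
    have hwz : ∀ i, ((MeasurableEquiv.toLp 2 (Fin d → ℝ)).symm z) i = z i := fun i => rfl
    have hnormsq : ‖z‖ ^ 2 = ∑ i, z i ^ 2 := by
      rw [EuclideanSpace.norm_eq, Real.sq_sqrt (by positivity)]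
      simp [Real.norm_eq_abs, sq_abs]
    have hsumdiv : ∑ i, -z i ^ 2 / (2 * σZ ^ 2) = -‖z‖ ^ 2 / (2 * σZ ^ 2) := by
      rw [hnormsq, ← Finset.sum_div, ← Finset.sum_neg_distrib]
    have hprodsplit : ∏ i, g i (z i)
        = (|z i0| * Real.exp ((z i0 ^ 2 - 1) / (4 * σZ ^ 2))) *
          Real.exp (-‖z‖ ^ 2 / (2 * σZ ^ 2)) := by
      rw [hg]
      simp only
      rw [Finset.prod_mul_distrib, ← Real.exp_sum,
        Finset.prod_ite_eq' Finset.univ i0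
          (fun i => |z i| * Real.exp ((z i ^ 2 - 1) / (4 * σZ ^ 2))),
        hsumdiv]
      simp
    rw [hG, hP]
    simp only [hz0, hnz, hwz]
    rw [hprodsplit]
    ring
  -- integrability of P
  have h1d : ∀ t : ℝ, (|t| * Real.exp ((t ^ 2 - 1) / (4 * σZ ^ 2))) * Real.exp (-t ^ 2 / (2 * σZ ^ 2))
      = Real.exp (-1 / (4 * σZ ^ 2)) * (|t| * Real.exp (-(1 / (4 * σZ ^ 2)) * t ^ 2)) := by
    intro t
    have harg : (t ^ 2 - 1) / (4 * σZ ^ 2) + -t ^ 2 / (2 * σZ ^ 2)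
        = -1 / (4 * σZ ^ 2) + -(1 / (4 * σZ ^ 2)) * t ^ 2 := by
      field_simp
      ring
    rw [mul_assoc, ← Real.exp_add, harg, Real.exp_add]
    ring
  have habs1 : Integrable (fun t : ℝ => |t| * Real.exp (-(1 / (4 * σZ ^ 2)) * t ^ 2)) volume := by
    have h := (integrable_mul_exp_neg_mul_sq (b := 1 / (4 * σZ ^ 2)) (by positivity)).abs
    have heq : (fun t : ℝ => |t * Real.exp (-(1 / (4 * σZ ^ 2)) * t ^ 2)|)
        = fun t : ℝ => |t| * Real.exp (-(1 / (4 * σZ ^ 2)) * t ^ 2) :=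
      funext fun t => by rw [abs_mul, abs_of_pos (Real.exp_pos _)]
    rwa [heq] at h
  have hgauss1 : ∀ c : ℝ, 0 < c → (fun t : ℝ => Real.exp (-t ^ 2 / c)) = fun t : ℝ => Real.exp (-(1 / c) * t ^ 2) :=
    fun c hc => funext fun t => by rw [neg_div, div_eq_inv_mul, one_div, neg_mul]
  have hgint : ∀ i, Integrable (g i) volume := by
    intro i
    rw [hg]
    by_cases hii : i = i0
    · simp only [if_pos hii]
      have : (fun t : ℝ => (|t| * Real.exp ((t ^ 2 - 1) / (4 * σZ ^ 2))) * Real.exp (-t ^ 2 / (2 * σZ ^ 2)))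
          = fun t : ℝ => Real.exp (-1 / (4 * σZ ^ 2)) * (|t| * Real.exp (-(1 / (4 * σZ ^ 2)) * t ^ 2)) :=
        funext h1d
      rw [this]
      exact habs1.const_mul _
    · simp only [if_neg hii, one_mul]
      rw [hgauss1 (2 * σZ ^ 2) (by positivity)]
      exact integrable_exp_neg_mul_sq (by positivity)
  have hPint : Integrable P volume := by
    rw [hP]
    exact (Integrable.fintype_prod hgint).const_mul C
  -- integral of P
  have hgi0val : ∫ t : ℝ, g i0 t = Real.exp (-1 / (4 * σZ ^ 2)) * (4 * σZ ^ 2) := by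
    rw [hg]
    simp only [eq_self_iff_true, if_true]
    have heq : (fun t : ℝ => (|t| * Real.exp ((t ^ 2 - 1) / (4 * σZ ^ 2))) * Real.exp (-t ^ 2 / (2 * σZ ^ 2)))
        = fun t : ℝ => Real.exp (-1 / (4 * σZ ^ 2)) * (|t| * Real.exp (-(1 / (4 * σZ ^ 2)) * t ^ 2)) :=
      funext h1d
    rw [heq, MeasureTheory.integral_const_mul, aux_integral_abs_mul_exp (by positivity), one_div, inv_inv]
  have hgival : ∀ i, i ≠ i0 → ∫ t : ℝ, g i t = Real.sqrt (2 * π * σZ ^ 2) := by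
    intro i hi
    rw [hg]
    simp only [if_neg hi, one_mul]
    rw [hgauss1 (2 * σZ ^ 2) (by positivity), integral_gaussian]
    congr 1
    rw [one_div, div_eq_mul_inv, inv_inv]
    ring
  have hPval : ∫ w, P w = C * (Real.exp (-1 / (4 * σZ ^ 2)) * (4 * σZ ^ 2) *
      (Real.sqrt (2 * π * σZ ^ 2)) ^ (d - 1)) := by
    rw [hP]
    rw [MeasureTheory.integral_const_mul]
    rw [MeasureTheory.volume_pi, MeasureTheory.integral_fintype_prod_eq_prod (ι := Fin d) g]
    congr 1
    rw [← Finset.mul_prod_erase Finset.univ _ (Finset.mem_univ i0), hgi0val,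
      Finset.prod_congr rfl (fun i hi => hgival i (Finset.ne_of_mem_erase hi)),
      Finset.prod_const, Finset.card_erase_of_mem (Finset.mem_univ i0),
      Finset.card_univ, Fintype.card_fin]
  -- transfer of integrals
  -- final numeric bound
  have hsmulG : (fun x => (ρ x).toNNReal • F x) = fun x => G (x - μZ) := by
    funext x
    rw [NNReal.smul_def, Real.coe_toNNReal _ (hρnn x)]
    exact hGF x
  have hFG : ∫ x, F x ∂(gaussianPi μZ σZ) = ∫ w, P w := by
    rw [hgp, integral_withDensity_eq_integral_smul hmeas, hsmulG,
      integral_sub_right_eq_self G μZ,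
      ← (b.measurePreserving_repr_symm).integral_comp
        (b.repr.symm.toHomeomorph.measurableEmbedding) G]
    simp_rw [hbridge]
    exact (EuclideanSpace.volume_preserving_symm_measurableEquiv_toLp (Fin d)).integral_comp' P
  have hFint : Integrable F (gaussianPi μZ σZ) := by
    rw [hgp, integrable_withDensity_iff_integrable_smul hmeas, hsmulG]
    have h4 : Integrable
        (fun z : EuclideanSpace ℝ (Fin d) => P ((MeasurableEquiv.toLp 2 (Fin d → ℝ)).symm z))
        volume :=
      ((EuclideanSpace.volume_preserving_symm_measurableEquiv_toLp (Fin d)).integrable_comp_emb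
        ((MeasurableEquiv.toLp 2 (Fin d → ℝ)).symm).measurableEmbedding).mpr hPint
    have h3 : Integrable (fun z : EuclideanSpace ℝ (Fin d) => G (b.repr.symm z)) volume := by
      simpa [hbridge] using h4
    have hG2 : Integrable G volume :=
      ((b.measurePreserving_repr_symm).integrable_comp_emb
        (b.repr.symm.toHomeomorph.measurableEmbedding)).mp h3
    simpa [sub_eq_add_neg] using hG2.comp_add_right (-μZ)
  have hnum : C * (Real.exp (-1 / (4 * σZ ^ 2)) * (4 * σZ ^ 2) *
      (Real.sqrt (2 * π * σZ ^ 2)) ^ (d - 1)) ≤ 4 * Real.exp (-0.2 / σZ ^ 2) := by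
    set a : ℝ := Real.sqrt (2 * π * σZ ^ 2) with ha
    have hapos : 0 < a := Real.sqrt_pos.mpr (by positivity)
    have ha2 : a ^ 2 = 2 * π * σZ ^ 2 := Real.sq_sqrt (by positivity)
    have hCa : C * a ^ (d - 1) = a⁻¹ := by
      rw [hC, ← ha2, ← Real.rpow_natCast a 2, ← Real.rpow_mul hapos.le,
        ← Real.rpow_natCast a (d - 1), ← Real.rpow_add hapos]
      have hcast : ((d - 1 : ℕ) : ℝ) = (d : ℝ) - 1 := by
        rw [Nat.cast_sub hd]
        norm_num
      rw [hcast]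
      have hexpo : ((2 : ℕ) : ℝ) * (-(d : ℝ) / 2) + ((d : ℝ) - 1) = -1 := by
        push_cast
        ring
      rw [hexpo, Real.rpow_neg_one]
    have hval : C * (Real.exp (-1 / (4 * σZ ^ 2)) * (4 * σZ ^ 2) * a ^ (d - 1))
        = (4 * σZ ^ 2 / a) * Real.exp (-1 / (4 * σZ ^ 2)) := by
      have : C * (Real.exp (-1 / (4 * σZ ^ 2)) * (4 * σZ ^ 2) * a ^ (d - 1))
          = (C * a ^ (d - 1)) * (Real.exp (-1 / (4 * σZ ^ 2)) * (4 * σZ ^ 2)) := by ring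
      rw [this, hCa]
      field_simp
    have hsa : σZ ≤ a := by
      have h5 : σZ = Real.sqrt (σZ ^ 2) := (Real.sqrt_sq hσ0.le).symm
      rw [h5, ha]
      apply Real.sqrt_le_sqrt
      nlinarith [Real.pi_gt_three]
    have hfrac : 4 * σZ ^ 2 / a ≤ 4 := by
      have h1 : 4 * σZ ^ 2 / a ≤ 4 * σZ ^ 2 / σZ := by gcongr
      have h2 : 4 * σZ ^ 2 / σZ = 4 * σZ := by
        field_simp
      rw [h2] at h1
      linarith
    have hexp : Real.exp (-1 / (4 * σZ ^ 2)) ≤ Real.exp (-0.2 / σZ ^ 2) := by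
      apply Real.exp_le_exp.mpr
      rw [div_le_div_iff₀ (by positivity) (by positivity)]
      nlinarith
    rw [hval]
    apply mul_le_mul hfrac hexp (Real.exp_pos _).le (by norm_num)
  calc ∫ x, |trunc 3 ⟪x, u⟫ - ⟪x, u⟫| ∂(gaussianPi μZ σZ)
      ≤ ∫ x, F x ∂(gaussianPi μZ σZ) := by
        refine integral_mono_of_nonneg (Filter.Eventually.of_forall fun x => abs_nonneg _)
          hFint (Filter.Eventually.of_forall hpoint)
    _ = ∫ w, P w := hFG
    _ = _ := hPval
    _ ≤ _ := hnum
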